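/- There exists a constant c > 0 such that for all real z, (1+e^{|z|}) · φ(z)² / (Φ(z)(1−Φ(z))) < c, where φ and Φ are the standard normal density and CDF. -/

import Mathlib

noncomputable def stdNormalPDF (z : ℝ) : ℝ :=
  Real.exp (-z ^ 2 / 2) / Real.sqrt (2 * Real.pi)

noncomputable def stdNormalCDF (z : ℝ) : ℝ :=
  ∫ t in Set.Iic z, stdNormalPDF t

open MeasureTheory Set Real

lemma twopi_pos : (0:ℝ) < 2 * Real.pi := by positivity

lemma pdf_pos (z : ℝ) : 0 < stdNormalPDF z := by
  unfold stdNormalPDF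
  positivity

lemma pdf_eq (z : ℝ) : stdNormalPDF z = Real.exp (-(1/2) * z ^ 2) / Real.sqrt (2 * Real.pi) := by
  unfold stdNormalPDF; ring_nf

lemma pdf_even (z : ℝ) : stdNormalPDF (-z) = stdNormalPDF z := by
  unfold stdNormalPDF; rw [neg_pow]; ring_nf

lemma integrable_pdf : Integrable stdNormalPDF := by
  simp only [funext pdf_eq]
  exact (integrable_exp_neg_mul_sq (by norm_num : (0:ℝ) < 1/2)).div_const _

lemma integral_pdf : ∫ z, stdNormalPDF z = 1 := by
  simp only [funext pdf_eq]
  rw [integral_div, integral_gaussian]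
  rw [div_eq_one_iff_eq (by positivity)]
  norm_num
  ring

lemma pdf_antitone {a b : ℝ} (h : a ^ 2 ≤ b ^ 2) : stdNormalPDF b ≤ stdNormalPDF a := by
  unfold stdNormalPDF
  gcongr

lemma cdf_neg (z : ℝ) : stdNormalCDF (-z) = 1 - stdNormalCDF z := by
  have h1 : stdNormalCDF (-z) = ∫ t in Set.Ioi z, stdNormalPDF t := by
    unfold stdNormalCDF
    rw [← integral_comp_neg_Ioi]
    simp only [pdf_even]
  have h2 : stdNormalCDF z + ∫ t in Set.Ioi z, stdNormalPDF t = 1 := by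
    unfold stdNormalCDF
    rw [← Set.compl_Iic, integral_add_compl measurableSet_Iic integrable_pdf, integral_pdf]
  linarith

lemma Ioc_lb {a b : ℝ} (hab : a ≤ b) (c : ℝ) (hc : ∀ t ∈ Set.Ioc a b, c ≤ stdNormalPDF t) :
    c * (b - a) ≤ ∫ t in Set.Ioc a b, stdNormalPDF t := by
  have := setIntegral_ge_of_const_le_real (μ := volume) measurableSet_Ioc
    (by simp : volume (Set.Ioc a b) ≠ ⊤) hc (integrable_pdf.integrableOn)
  rwa [measureReal_def, Real.volume_Ioc, ENNReal.toReal_ofReal (by linarith)] at this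

lemma Ioc_le_Iic (a b : ℝ) :
    ∫ t in Set.Ioc a b, stdNormalPDF t ≤ stdNormalCDF b := by
  unfold stdNormalCDF
  apply setIntegral_mono_set integrable_pdf.integrableOn
  · exact Filter.Eventually.of_forall fun t => (pdf_pos t).le
  · exact Filter.Eventually.of_forall (fun t ht => ht.2 : ∀ t ∈ Set.Ioc a b, t ∈ Set.Iic b)

lemma Ioc_le_Ioi (a b : ℝ) :
    ∫ t in Set.Ioc a b, stdNormalPDF t ≤ ∫ t in Set.Ioi a, stdNormalPDF t := by
  apply setIntegral_mono_set integrable_pdf.integrableOn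
  · exact Filter.Eventually.of_forall fun t => (pdf_pos t).le
  · exact Filter.Eventually.of_forall (fun t ht => ht.1 : ∀ t ∈ Set.Ioc a b, t ∈ Set.Ioi a)

lemma one_sub_cdf (z : ℝ) : 1 - stdNormalCDF z = ∫ t in Set.Ioi z, stdNormalPDF t := by
  have h2 : stdNormalCDF z + ∫ t in Set.Ioi z, stdNormalPDF t = 1 := by
    unfold stdNormalCDF
    rw [← Set.compl_Iic, integral_add_compl measurableSet_Iic integrable_pdf, integral_pdf]
  linarith

lemma min_pdf_le {a b t : ℝ} (ha : a ≤ t) (hb : t ≤ b) :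
    min (stdNormalPDF a) (stdNormalPDF b) ≤ stdNormalPDF t := by
  rcases le_total 0 t with h | h
  · exact le_trans (min_le_right _ _) (pdf_antitone (by nlinarith))
  · exact le_trans (min_le_left _ _) (pdf_antitone (by nlinarith))

lemma cdf_pos (z : ℝ) : 0 < stdNormalCDF z := by
  have h1 := Ioc_lb (by linarith : z - 1 ≤ z) (min (stdNormalPDF (z-1)) (stdNormalPDF z))
    (fun t ht => min_pdf_le (by linarith [ht.1]) ht.2)
  have h2 := Ioc_le_Iic (z-1) z
  have h3 : 0 < min (stdNormalPDF (z-1)) (stdNormalPDF z) :=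
    lt_min (pdf_pos _) (pdf_pos _)
  nlinarith [h1, h2]

lemma one_sub_cdf_lb (z : ℝ) :
    min (stdNormalPDF z) (stdNormalPDF (z+1)) ≤ 1 - stdNormalCDF z := by
  have h1 := Ioc_lb (by linarith : z ≤ z + 1) (min (stdNormalPDF z) (stdNormalPDF (z+1)))
    (fun t ht => min_pdf_le (le_of_lt ht.1) ht.2)
  have h2 := Ioc_le_Ioi z (z+1)
  rw [one_sub_cdf]
  nlinarith

lemma cdf_lt_one (z : ℝ) : stdNormalCDF z < 1 := by
  have h := one_sub_cdf_lb z
  have h3 : 0 < min (stdNormalPDF z) (stdNormalPDF (z+1)) :=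
    lt_min (pdf_pos _) (pdf_pos _)
  linarith

lemma cdf_half (z : ℝ) (hz : 0 ≤ z) : 1/2 ≤ stdNormalCDF z := by
  have h0 : stdNormalCDF 0 = 1/2 := by
    have := cdf_neg 0
    rw [neg_zero] at this
    linarith
  have hmono : stdNormalCDF 0 ≤ stdNormalCDF z := by
    unfold stdNormalCDF
    apply setIntegral_mono_set integrable_pdf.integrableOn
    · exact Filter.Eventually.of_forall fun t => (pdf_pos t).le
    · exact Filter.Eventually.of_forall (fun t ht => le_trans ht hz : ∀ t ∈ Set.Iic 0, t ∈ Set.Iic z)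
  linarith

lemma key (z : ℝ) (hz : 0 ≤ z) :
    (1 + Real.exp z) * (stdNormalPDF z) ^ 2 < 1000 * (stdNormalCDF z * (1 - stdNormalCDF z)) := by
  have hmin : min (stdNormalPDF z) (stdNormalPDF (z+1)) = stdNormalPDF (z+1) :=
    min_eq_right (pdf_antitone (by nlinarith))
  have hub : stdNormalPDF (z+1) ≤ 1 - stdNormalCDF z := hmin ▸ one_sub_cdf_lb z
  have hhalf := cdf_half z hz
  have hpos1 : 0 < 1 - stdNormalCDF z := lt_of_lt_of_le (pdf_pos _) hub
  have main : (1 + Real.exp z) * (stdNormalPDF z) ^ 2 < 500 * stdNormalPDF (z+1) := by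
    unfold stdNormalPDF
    rw [div_pow, ← Real.exp_nat_mul]
    have hsq : Real.sqrt (2 * Real.pi) ^ 2 = 2 * Real.pi := Real.sq_sqrt twopi_pos.le
    have hs1 : (1:ℝ) ≤ Real.sqrt (2 * Real.pi) := by
      rw [show (1:ℝ) = Real.sqrt 1 by simp]
      apply Real.sqrt_le_sqrt
      nlinarith [Real.pi_gt_three]
    have hspos : (0:ℝ) < Real.sqrt (2 * Real.pi) := by linarith
    have hss : Real.sqrt (2 * Real.pi) ≤ Real.sqrt (2 * Real.pi) ^ 2 := by nlinarith
    have hnum : (0:ℝ) ≤ (1 + Real.exp z) * Real.exp ((2:ℕ) * (-z ^ 2 / 2)) := by positivity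
    have hmain2 : (1 + Real.exp z) * Real.exp ((2:ℕ) * (-z ^ 2 / 2))
        < 500 * Real.exp (-(z+1) ^ 2 / 2) := by
      have hee : (1 + Real.exp z) ≤ 2 * Real.exp z := by
        have : (1:ℝ) ≤ Real.exp z := Real.one_le_exp hz
        linarith
      set A : ℝ := z + (2:ℕ) * (-z ^ 2 / 2) + (z+1) ^ 2 / 2 with hA
      have h27 : Real.exp A ≤ 27 := by
        have harg : A ≤ 3 := by rw [hA]; push_cast; nlinarith [sq_nonneg (z - 2)]
        calc Real.exp A ≤ Real.exp 3 := Real.exp_le_exp.2 harg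
          _ ≤ 2.7182818286 ^ 3 := by
              rw [show (3:ℝ) = 1+1+1 by norm_num, Real.exp_add, Real.exp_add]
              have := Real.exp_one_lt_d9
              have h0 := Real.exp_pos 1
              nlinarith
          _ ≤ 27 := by norm_num
      have hsplit : Real.exp z * Real.exp ((2:ℕ) * (-z ^ 2 / 2))
          = Real.exp A * Real.exp (-(z+1) ^ 2 / 2) := by
        rw [← Real.exp_add, ← Real.exp_add, hA]
        congr 1
        push_cast
        ring
      nlinarith [Real.exp_pos (-(z+1) ^ 2 / 2), Real.exp_pos ((2:ℕ) * (-z ^ 2 / 2)),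
        Real.exp_pos A, Real.exp_pos z]
    calc (1 + Real.exp z) * (Real.exp ((2:ℕ) * (-z ^ 2 / 2)) / Real.sqrt (2 * Real.pi) ^ 2)
        = ((1 + Real.exp z) * Real.exp ((2:ℕ) * (-z ^ 2 / 2))) / Real.sqrt (2 * Real.pi) ^ 2 := by
          ring
      _ ≤ ((1 + Real.exp z) * Real.exp ((2:ℕ) * (-z ^ 2 / 2))) / Real.sqrt (2 * Real.pi) := by
          gcongr
      _ < (500 * Real.exp (-(z+1) ^ 2 / 2)) / Real.sqrt (2 * Real.pi) := by
          gcongr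
      _ = 500 * (Real.exp (-(z+1) ^ 2 / 2) / Real.sqrt (2 * Real.pi)) := by ring
  nlinarith [pdf_pos (z+1), Real.exp_pos z, pdf_pos z, sq_nonneg (stdNormalPDF z)]

theorem stmt_10 :
    ∃ c > (0 : ℝ), ∀ z : ℝ,
      (1 + Real.exp |z|) * (stdNormalPDF z) ^ 2 /
        (stdNormalCDF z * (1 - stdNormalCDF z)) < c := by
  refine ⟨1000, by norm_num, fun z => ?_⟩
  have hD : 0 < stdNormalCDF z * (1 - stdNormalCDF z) :=
    mul_pos (cdf_pos z) (by linarith [cdf_lt_one z])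
  rw [div_lt_iff₀ hD]
  rcases le_total 0 z with hz | hz
  · rw [abs_of_nonneg hz]; exact key z hz
  · rw [abs_of_nonpos hz]
    have h1 : stdNormalPDF z = stdNormalPDF (-z) := (pdf_even z).symm
    have h2 : stdNormalCDF z * (1 - stdNormalCDF z)
        = stdNormalCDF (-z) * (1 - stdNormalCDF (-z)) := by
      rw [cdf_neg z]; ring
    rw [h1, h2]
    exact key (-z) (by linarith)
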